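/- Let A ⊆ ℝⁿ be a bounded set with measure-zero (topological) boundary and S ⊆ ℝⁿ bounded. Then the function φ : ℝⁿ → ℝ defined by φ(z) = μ((A + z) ∩ S) is continuous. More precisely, for any z₁, z₂ ∈ ℝⁿ, |φ(z₁) − φ(z₂)| ≤ μ(A + ‖z₁ − z₂‖·Bₙ) − μ(A), where Bₙ is the closed unit ball, and this difference tends to 0 as ‖z₁ − z₂‖ → 0 because μ(closure(A)) = μ(A). -/
import Mathlib


open MeasureTheory Pointwise Metric

/-- For `A` bounded with measure-zero boundary and `S` bounded, `φ(z) = μ((A+z) ∩ S)` is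
continuous; quantitatively `|φ(z₁) − φ(z₂)| ≤ μ(A + ‖z₁−z₂‖Bₙ) − μ(A)`, and
`μ(closure A) = μ(A)`. -/
theorem stmt_2 (n : ℕ) (A S : Set (EuclideanSpace ℝ (Fin n)))
    (hAm : MeasurableSet A) (hSm : MeasurableSet S)
    (hAb : Bornology.IsBounded A) (hSb : Bornology.IsBounded S)
    (hAfr : volume (frontier A) = 0) :
    Continuous (fun z => (volume (((fun a => a + z) '' A) ∩ S)).toReal) ∧
    (∀ z₁ z₂ : EuclideanSpace ℝ (Fin n),
      |(volume (((fun a => a + z₁) '' A) ∩ S)).toReal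
          - (volume (((fun a => a + z₂) '' A) ∩ S)).toReal|
        ≤ (volume (A + Metric.closedBall (0 : EuclideanSpace ℝ (Fin n)) ‖z₁ - z₂‖)).toReal
          - (volume A).toReal) ∧
    volume (closure A) = volume A := by
  have hAfin : volume A ≠ ⊤ := hAb.measure_lt_top.ne
  have hSfin : volume S ≠ ⊤ := hSb.measure_lt_top.ne
  -- closure has same measure
  have hcl : volume (closure A) = volume A := by
    refine le_antisymm ?_ (measure_mono subset_closure)
    calc volume (closure A) ≤ volume (A ∪ frontier A) := by
          refine measure_mono fun x hx => ?_
          by_cases hxA : x ∈ A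
          · exact Or.inl hxA
          · exact Or.inr ⟨hx, fun h => hxA (interior_subset h)⟩
      _ ≤ volume A + volume (frontier A) := measure_union_le _ _
      _ = volume A := by rw [hAfr, add_zero]
  -- image measure facts
  have himg : ∀ (z : EuclideanSpace ℝ (Fin n)) (T : Set (EuclideanSpace ℝ (Fin n))),
      volume ((fun a => a + z) '' T) = volume T := by
    intro z T
    rw [Set.image_add_right]
    exact measure_preimage_add_right volume _ T
  have hXm : ∀ (z : EuclideanSpace ℝ (Fin n)),
      MeasurableSet ((fun a => a + z) '' A) := by
    intro z
    rw [Set.image_add_right]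
    exact hAm.preimage (measurable_add_const _)
  -- key ENNReal estimate
  have key : ∀ z₁ z₂ : EuclideanSpace ℝ (Fin n),
      volume (((fun a => a + z₁) '' A) ∩ S)
        ≤ volume (((fun a => a + z₂) '' A) ∩ S)
          + (volume (A + closedBall (0 : EuclideanSpace ℝ (Fin n)) ‖z₁ - z₂‖) - volume A) := by
    intro z₁ z₂
    set r := ‖z₁ - z₂‖ with hr
    set X₁ := (fun a => a + z₁) '' A
    set X₂ := (fun a => a + z₂) '' A
    have hsub : X₁ ∩ S ⊆ (X₂ ∩ S) ∪ (X₁ \ X₂) := by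
      intro x hx
      by_cases hx2 : x ∈ X₂
      · exact Or.inl ⟨hx2, hx.2⟩
      · exact Or.inr ⟨hx.1, hx2⟩
    calc volume (X₁ ∩ S) ≤ volume ((X₂ ∩ S) ∪ (X₁ \ X₂)) := measure_mono hsub
      _ ≤ volume (X₂ ∩ S) + volume (X₁ \ X₂) := measure_union_le _ _
      _ ≤ volume (X₂ ∩ S) + (volume (A + closedBall 0 r) - volume A) := by
          gcongr
          have h1 : X₁ \ X₂ ⊆ (fun a => a + z₂) '' ((A + closedBall 0 r) \ A) := by
            have himg2 : (fun a => a + z₂) '' ((A + closedBall 0 r) \ A)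
                = ((fun a => a + z₂) '' (A + closedBall 0 r)) \ X₂ :=
              Set.image_diff (add_left_injective z₂) _ _
            rw [himg2]
            refine Set.diff_subset_diff_left ?_
            rintro x ⟨a, ha, rfl⟩
            exact ⟨a + (z₁ - z₂), Set.add_mem_add ha (by rw [hr]; exact mem_closedBall_zero_iff.2 le_rfl), by abel_nf⟩
          calc volume (X₁ \ X₂) ≤ volume ((fun a => a + z₂) '' ((A + closedBall 0 r) \ A)) :=
                measure_mono h1
            _ = volume ((A + closedBall 0 r) \ A) := himg _ _
            _ = volume (A + closedBall 0 r) - volume A := by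
                refine measure_diff ?_ hAm.nullMeasurableSet hAfin
                intro a ha
                exact ⟨a, ha, 0, mem_closedBall_self (hr ▸ norm_nonneg _), add_zero a⟩
    -- done
  have hABfin : ∀ r : ℝ, volume (A + closedBall (0 : EuclideanSpace ℝ (Fin n)) r) ≠ ⊤ :=
    fun r => (hAb.add (isBounded_closedBall)).measure_lt_top.ne
  have hAle : ∀ r : ℝ, 0 ≤ r → volume A ≤ volume (A + closedBall (0 : EuclideanSpace ℝ (Fin n)) r) := by
    intro r hr0
    refine measure_mono fun a ha => ⟨a, ha, 0, mem_closedBall_self hr0, add_zero a⟩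
  -- real version
  have keyR : ∀ z₁ z₂ : EuclideanSpace ℝ (Fin n),
      (volume (((fun a => a + z₁) '' A) ∩ S)).toReal
          - (volume (((fun a => a + z₂) '' A) ∩ S)).toReal
        ≤ (volume (A + closedBall (0 : EuclideanSpace ℝ (Fin n)) ‖z₁ - z₂‖)).toReal
          - (volume A).toReal := by
    intro z₁ z₂
    have h := key z₁ z₂
    have hf1 : volume (((fun a => a + z₁) '' A) ∩ S) ≠ ⊤ :=
      ((measure_mono Set.inter_subset_right).trans_lt hSb.measure_lt_top).ne
    have hf2 : volume (((fun a => a + z₂) '' A) ∩ S) ≠ ⊤ :=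
      ((measure_mono Set.inter_subset_right).trans_lt hSb.measure_lt_top).ne
    have hrr := ENNReal.toReal_mono (by
        exact ENNReal.add_ne_top.2 ⟨hf2, (tsub_le_self).trans_lt
          (hABfin ‖z₁ - z₂‖).lt_top |>.ne⟩) h
    rw [ENNReal.toReal_add hf2 ((tsub_le_self).trans_lt (hABfin ‖z₁ - z₂‖).lt_top |>.ne),
      ENNReal.toReal_sub_of_le (hAle _ (norm_nonneg _)) (hABfin _)] at hrr
    linarith
  have absR : ∀ z₁ z₂ : EuclideanSpace ℝ (Fin n),
      |(volume (((fun a => a + z₁) '' A) ∩ S)).toReal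
          - (volume (((fun a => a + z₂) '' A) ∩ S)).toReal|
        ≤ (volume (A + closedBall (0 : EuclideanSpace ℝ (Fin n)) ‖z₁ - z₂‖)).toReal
          - (volume A).toReal := by
    intro z₁ z₂
    rw [abs_sub_le_iff]
    refine ⟨keyR z₁ z₂, ?_⟩
    have := keyR z₂ z₁
    rwa [norm_sub_rev] at this
  refine ⟨?_, absR, hcl⟩
  -- continuity
  have htend : Filter.Tendsto (fun r => (volume (cthickening r A)).toReal)
      (nhds 0) (nhds (volume A).toReal) := by
    have h1 : Filter.Tendsto (fun r => volume (cthickening r A)) (nhds 0)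
        (nhds (volume (closure A))) :=
      tendsto_measure_cthickening ⟨1, one_pos, (hAb.cthickening).measure_lt_top.ne⟩
    rw [hcl] at h1
    exact (ENNReal.tendsto_toReal hAfin).comp h1
  rw [Metric.continuous_iff]
  intro b ε hε
  have hev : ∀ᶠ r in nhds (0 : ℝ), (volume (cthickening r A)).toReal < (volume A).toReal + ε :=
    htend.eventually_lt_const (by linarith)
  rw [Metric.eventually_nhds_iff] at hev
  obtain ⟨δ, hδ, hδ'⟩ := hev
  refine ⟨δ, hδ, fun a hab => ?_⟩
  have hsub2 : A + closedBall (0 : EuclideanSpace ℝ (Fin n)) ‖a - b‖ ⊆ cthickening ‖a - b‖ A := by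
    rintro x ⟨p, hp, q, hq, rfl⟩
    refine mem_cthickening_of_dist_le (p + q) p _ A hp ?_
    rw [dist_eq_norm]
    simpa using mem_closedBall_zero_iff.1 hq
  have h1 : (volume (A + closedBall (0 : EuclideanSpace ℝ (Fin n)) ‖a - b‖)).toReal
      ≤ (volume (cthickening ‖a - b‖ A)).toReal :=
    ENNReal.toReal_mono (hAb.cthickening).measure_lt_top.ne (measure_mono hsub2)
  have h2 : (volume (cthickening ‖a - b‖ A)).toReal < (volume A).toReal + ε := by
    refine hδ' ?_
    rw [Real.dist_eq, sub_zero, abs_of_nonneg (norm_nonneg (a - b)), ← dist_eq_norm]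
    exact hab
  calc dist (volume ((fun a_1 => a_1 + a) '' A ∩ S)).toReal (volume ((fun a => a + b) '' A ∩ S)).toReal
      = |(volume ((fun a_1 => a_1 + a) '' A ∩ S)).toReal - (volume ((fun a => a + b) '' A ∩ S)).toReal| := rfl
    _ ≤ (volume (A + closedBall (0 : EuclideanSpace ℝ (Fin n)) ‖a - b‖)).toReal - (volume A).toReal := absR a b
    _ < ε := by linarith
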